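/- Let B ⊆ ℝ^q be a polyhedron and let E be a face of Φ(B) such that E ⊄ 0⁺B × {0}. Then F := p[E ∩ (B × {1})], where p(y) := (y₁,…,y_q), is a face of B and Φ(F) = E. -/

import Mathlib

open Matrix Set Pointwise

noncomputable section

/-- `cone B = {l • x : l ≥ 0, x ∈ conv B}` -/
def coneOf {E : Type*} [AddCommGroup E] [Module ℝ E] (B : Set E) : Set E :=
  {y | ∃ l : ℝ, 0 ≤ l ∧ ∃ x ∈ convexHull ℝ B, y = l • x}

/-- `F` is a face of the convex set `B`. -/
def IsFaceOf {E : Type*} [AddCommGroup E] [Module ℝ E] (F B : Set E) : Prop :=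
  Convex ℝ F ∧ F ⊆ B ∧
    ∀ y ∈ B, ∀ z ∈ B, ∀ l : ℝ, 0 < l → l < 1 → l • y + (1 - l) • z ∈ F → y ∈ F ∧ z ∈ F

/-- recession cone `0⁺B` of a convex set. -/
def recCone {E : Type*} [AddCommGroup E] [Module ℝ E] (B : Set E) : Set E :=
  {d | ∀ x ∈ B, ∀ t : ℝ, 0 ≤ t → x + t • d ∈ B}

/-- lineality space `L(B) = 0⁺B ∩ (−0⁺B)`. -/
def linealOf {E : Type*} [AddCommGroup E] [Module ℝ E] (B : Set E) : Set E :=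
  recCone B ∩ -recCone B

/-- dimension of (the affine hull of) a set. -/
def sdim {E : Type*} [AddCommGroup E] [Module ℝ E] (B : Set E) : ℕ :=
  Module.finrank ℝ (vectorSpan ℝ B)

def IsPolyhedron {d : ℕ} (B : Set (Fin d → ℝ)) : Prop :=
  ∃ (k : ℕ) (W : Matrix (Fin k) (Fin d) ℝ) (v : Fin k → ℝ), B = {x | v ≤ W.mulVec x}

/-- orthogonal complement (as a set) of a set of vectors. -/
def orthSet {d : ℕ} (L : Set (Fin d → ℝ)) : Set (Fin d → ℝ) :=
  {y | ∀ z ∈ L, y ⬝ᵥ z = 0}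

/-- polar cone `K° = {w : ∀ y ∈ K, wᵀy ≤ 0}`. -/
def polarCone {d : ℕ} (K : Set (Fin d → ℝ)) : Set (Fin d → ℝ) :=
  {w | ∀ y ∈ K, w ⬝ᵥ y ≤ 0}

/-- the last index of `Fin q` (1-based index `q`). -/
def lastIdx (q : ℕ) (hq : 0 < q) : Fin q := ⟨q - 1, by omega⟩

/-- `y ↦ (y,1)`. -/
def lift1 {q : ℕ} (y : Fin q → ℝ) : Fin (q + 1) → ℝ := Fin.snoc y 1

/-- `y ↦ (y,0)`. -/
def lift0 {q : ℕ} (y : Fin q → ℝ) : Fin (q + 1) → ℝ := Fin.snoc y 0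

/-- `p(y) = (y₁,…,y_q)`. -/
def projq {q : ℕ} (y : Fin (q + 1) → ℝ) : Fin q → ℝ := fun i => y i.castSucc

/-- `Φ(B) = cl cone (B × {1})`. -/
def PhiMap {q : ℕ} (B : Set (Fin q → ℝ)) : Set (Fin (q + 1) → ℝ) :=
  closure (coneOf (lift1 '' B))

/-- the block matrix `G = (A; −ZᵀP; 0)`. -/
def Gmat {m n q r : ℕ} (A : Matrix (Fin m) (Fin n) ℝ) (P : Matrix (Fin q) (Fin n) ℝ)
    (Z : Matrix (Fin q) (Fin r) ℝ) : Matrix (Fin (m + r + 1)) (Fin n) ℝ :=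
  fun i j =>
    if h : (i : ℕ) < m then A ⟨i, h⟩ j
    else if h2 : (i : ℕ) < m + r then -(∑ l : Fin q, Z l ⟨(i : ℕ) - m, by omega⟩ * P l j)
    else 0

/-- the block matrix `H` with rows `(0, −b)`, `(Zᵀ, 0)` and `(0,…,0,1)`. -/
def Hmat {m q r : ℕ} (b : Fin m → ℝ) (Z : Matrix (Fin q) (Fin r) ℝ) :
    Matrix (Fin (m + r + 1)) (Fin (q + 1)) ℝ :=
  fun i j =>
    if h : (i : ℕ) < m then (if (j : ℕ) = q then -b ⟨i, h⟩ else 0)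
    else if h2 : (i : ℕ) < m + r then
      (if hj : (j : ℕ) < q then Z ⟨j, hj⟩ ⟨(i : ℕ) - m, by omega⟩ else 0)
    else (if (j : ℕ) = q then 1 else 0)

/-- dual objective `D(u,w) = (w₁,…,w_{q−1}, bᵀu)`. -/
def Dmap {m q : ℕ} (b : Fin m → ℝ) (uw : (Fin m → ℝ) × (Fin q → ℝ)) : Fin q → ℝ :=
  fun i => if (i : ℕ) < q - 1 then uw.2 i else b ⬝ᵥ uw.1

/-- `R* = {v : v₁ = ⋯ = v_{q−1} = 0, v_q ≥ 0}`. -/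
def RstarSet (q : ℕ) (hq : 0 < q) : Set (Fin q → ℝ) :=
  {v | (∀ i : Fin q, (i : ℕ) < q - 1 → v i = 0) ∧ 0 ≤ v (lastIdx q hq)}

/-- dual feasible set `T`. -/
def Tset {m n q r : ℕ} (A : Matrix (Fin m) (Fin n) ℝ) (P : Matrix (Fin q) (Fin n) ℝ)
    (Z : Matrix (Fin q) (Fin r) ℝ) (cbar : Fin q → ℝ) :
    Set ((Fin m → ℝ) × (Fin q → ℝ)) :=
  {uw | ∃ v : Fin r → ℝ, 0 ≤ v ∧ uw.2 = Z.mulVec v ∧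
    Aᵀ.mulVec uw.1 = Pᵀ.mulVec uw.2 ∧ cbar ⬝ᵥ uw.2 = 1 ∧ 0 ≤ uw.1}

/-- `φ(y,w) = Σ_{i<q} y_i w_i + y_q (1 − Σ_{i<q} c̄_i w_i) − w_q`. -/
def phiFn {q : ℕ} (hq : 0 < q) (cbar : Fin q → ℝ) (y w : Fin q → ℝ) : ℝ :=
  (∑ i : Fin q, if (i : ℕ) < q - 1 then y i * w i else 0)
    + y (lastIdx q hq) * (1 - ∑ i : Fin q, if (i : ℕ) < q - 1 then cbar i * w i else 0)
    - w (lastIdx q hq)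

/-- duality map `Ψ(F*) = ⋂_{w ∈ F*} {y ∈ Pset : φ(y,w) = 0}`. -/
def PsiMap {q : ℕ} (hq : 0 < q) (cbar : Fin q → ℝ) (Pset : Set (Fin q → ℝ))
    (Fstar : Set (Fin q → ℝ)) : Set (Fin q → ℝ) :=
  ⋂ w ∈ Fstar, {y ∈ Pset | phiFn hq cbar y w = 0}

/-- `My = (−y₁,…,−y_{q−1}, c̄₁y₁+⋯+c̄_{q−1}y_{q−1} − y_{q+1}, y_q)`. -/
def Mmap {q : ℕ} (hq : 0 < q) (cbar : Fin q → ℝ) (y : Fin (q + 1) → ℝ) : Fin (q + 1) → ℝ :=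
  fun i =>
    if (i : ℕ) < q - 1 then -y i
    else if (i : ℕ) = q - 1 then
      (∑ j : Fin q, if (j : ℕ) < q - 1 then cbar j * y j.castSucc else 0) - y (Fin.last q)
    else y ((lastIdx q hq).castSucc)

/-- `M⁻¹w = (−w₁,…,−w_{q−1}, w_{q+1}, −cᵀw)` where `c = (c̄,0)`. -/
def MinvMap {q : ℕ} (cbar : Fin q → ℝ) (w : Fin (q + 1) → ℝ) : Fin (q + 1) → ℝ :=
  fun i =>
    if (i : ℕ) < q - 1 then -w i
    else if (i : ℕ) = q - 1 then w (Fin.last q)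
    else -((Fin.snoc cbar 0 : Fin (q + 1) → ℝ) ⬝ᵥ w)

/-- `p*(w) = (w₁,…,w_{q−1},w_{q+1})`. -/
def pstarMap {q : ℕ} (w : Fin (q + 1) → ℝ) : Fin q → ℝ :=
  fun i => if (i : ℕ) < q - 1 then w i.castSucc else w (Fin.last q)

/-- `y` generates an extreme ray of the pointed convex cone `Q`. -/
def IsExtremeDir {E : Type*} [AddCommGroup E] [Module ℝ E] (Q : Set E) (y : E) : Prop :=
  y ∈ Q ∧ y ≠ 0 ∧ IsFaceOf (coneOf {y}) Q

/-- `σ(u,w) = (u¹, −p(w))` where `u = (u¹,u²,u³) ∈ ℝ^m×ℝ^r×ℝ`. -/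
def sigmaMap {m q r : ℕ} (uw : (Fin (m + r + 1) → ℝ) × (Fin (q + 1) → ℝ)) :
    (Fin m → ℝ) × (Fin q → ℝ) :=
  (fun i => uw.1 (Fin.castLE (by omega) i), -projq uw.2)

section Stmt7Aux
open Filter

lemma continuous_dot' {n : ℕ} (c : Fin n → ℝ) : Continuous fun x : Fin n → ℝ => c ⬝ᵥ x := by
  simp only [dotProduct]
  exact continuous_finset_sum _ fun j _ => continuous_const.mul (continuous_apply j)

section ConeFace
variable {V : Type*} [AddCommGroup V] [Module ℝ V] {E Q : Set V}

def IsConeSet (Q : Set V) : Prop := Convex ℝ Q ∧ ∀ a ∈ Q, ∀ l : ℝ, 0 ≤ l → l • a ∈ Q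

lemma face_zero_two (hQ : IsConeSet Q) (hE : IsFaceOf E Q) {a : V} (ha : a ∈ E) :
    (0 : V) ∈ E ∧ (2 : ℝ) • a ∈ E := by
  have haQ : a ∈ Q := hE.2.1 ha
  have h2 : (2 : ℝ) • a ∈ Q := hQ.2 a haQ 2 (by norm_num)
  have h0 : (0 : V) ∈ Q := by
    have := hQ.2 a haQ 0 le_rfl; simpa using this
  have hcomb : (1/2 : ℝ) • ((2:ℝ) • a) + (1 - 1/2 : ℝ) • (0 : V) ∈ E := by
    rw [smul_smul]; norm_num; exact ha
  have := hE.2.2 _ h2 _ h0 (1/2) (by norm_num) (by norm_num) hcomb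
  exact ⟨this.2, this.1⟩

lemma face_smul_mem (hQ : IsConeSet Q) (hE : IsFaceOf E Q) {a : V} (ha : a ∈ E)
    {l : ℝ} (hl : 0 ≤ l) : l • a ∈ E := by
  have h0 : (0 : V) ∈ E := (face_zero_two hQ hE ha).1
  rcases le_or_gt l 1 with h | h
  · have := hE.1 ha h0 hl (by linarith : (0:ℝ) ≤ 1 - l) (by ring)
    simpa using this
  · have hlQ : l • a ∈ Q := hQ.2 a (hE.2.1 ha) l hl
    have h0Q : (0 : V) ∈ Q := hE.2.1 h0
    have hcomb : (1/l : ℝ) • (l • a) + (1 - 1/l : ℝ) • (0 : V) ∈ E := by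
      rw [smul_smul, one_div, inv_mul_cancel₀ (by linarith)]; simpa using ha
    exact (hE.2.2 _ hlQ _ h0Q (1/l) (by positivity) (by rw [div_lt_one] <;> linarith) hcomb).1

lemma face_add_mem (hQ : IsConeSet Q) (hE : IsFaceOf E Q) {a b : V} (ha : a ∈ E)
    (hb : b ∈ E) : a + b ∈ E := by
  have hm : (1/2 : ℝ) • a + (1 - 1/2 : ℝ) • b ∈ E := hE.1 ha hb (by norm_num) (by norm_num) (by ring)
  have h2 : (2:ℝ) • ((1/2:ℝ) • a + (1 - 1/2:ℝ) • b) ∈ E := face_smul_mem hQ hE hm (by norm_num)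
  rw [smul_add, smul_smul, smul_smul] at h2
  norm_num at h2
  exact h2

end ConeFace

lemma face_closed {n : ℕ} {ι : Type*} [Fintype ι] (c : ι → (Fin n → ℝ)) (dd : ι → ℝ)
    {D E : Set (Fin n → ℝ)} (hD : D = {x | ∀ i, dd i ≤ c i ⬝ᵥ x})
    (hE : IsFaceOf E D) : IsClosed E := by
  classical
  rcases E.eq_empty_or_nonempty with hemp | ⟨e₀, he₀⟩
  · rw [hemp]; exact isClosed_empty
  have hED : E ⊆ D := hE.2.1
  have hmemD : ∀ x ∈ E, ∀ i, dd i ≤ c i ⬝ᵥ x := by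
    intro x hx i; have := hED hx; rw [hD] at this; exact this i
  set I : Set ι := {i | ∀ x ∈ E, c i ⬝ᵥ x = dd i} with hI
  have hwit : ∀ i : ι, ∃ y, y ∈ E ∧ (i ∉ I → dd i < c i ⬝ᵥ y) := by
    intro i
    by_cases hi : i ∈ I
    · exact ⟨e₀, he₀, fun h => absurd hi h⟩
    · simp only [hI, Set.mem_setOf_eq, not_forall] at hi
      obtain ⟨y, hy, hne⟩ := hi
      exact ⟨y, hy, fun _ => lt_of_le_of_ne (hmemD y hy i) (Ne.symm hne)⟩
  choose y hyE hystrict using hwit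
  set N : ℕ := Fintype.card ι with hN
  set z : Option ι → (Fin n → ℝ) := fun o => o.elim e₀ y with hz
  set x₀ : Fin n → ℝ := ∑ o : Option ι, ((N:ℝ)+1)⁻¹ • z o with hx₀
  have hNpos : (0:ℝ) < (N:ℝ) + 1 := by positivity
  have hx₀E : x₀ ∈ E := by
    apply hE.1.sum_mem (fun o _ => by positivity)
    · simp [Finset.sum_const, Finset.card_univ, hN]
      rw [mul_inv_cancel₀ (by positivity)]
    · rintro (_|i) _
      · exact he₀
      · exact hyE i
  have hdotx₀ : ∀ i : ι, c i ⬝ᵥ x₀ = ∑ o : Option ι, ((N:ℝ)+1)⁻¹ * (c i ⬝ᵥ z o) := by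
    intro i
    rw [hx₀]
    rw [show (c i ⬝ᵥ ∑ o : Option ι, ((N:ℝ)+1)⁻¹ • z o) = ∑ o : Option ι, c i ⬝ᵥ (((N:ℝ)+1)⁻¹ • z o) from ?_]
    · congr 1; funext o; rw [dotProduct_smul]; simp [smul_eq_mul]
    · induction (Finset.univ : Finset (Option ι)) using Finset.induction with
      | empty => simp
      | insert hnotmem => simp_all [Finset.sum_insert, dotProduct_add]
  have hx₀tight : ∀ i ∈ I, c i ⬝ᵥ x₀ = dd i := fun i hi => hi x₀ hx₀E
  have hx₀strict : ∀ i, i ∉ I → dd i < c i ⬝ᵥ x₀ := by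
    intro i hi
    rw [hdotx₀ i]
    have : dd i = ∑ _o : Option ι, ((N:ℝ)+1)⁻¹ * dd i := by
      rw [Finset.sum_const, Finset.card_univ]
      simp [hN, Fintype.card_option]
      field_simp
    rw [this]
    apply Finset.sum_lt_sum
    · rintro (_|j) _
      · exact mul_le_mul_of_nonneg_left (hmemD e₀ he₀ i) (by positivity)
      · exact mul_le_mul_of_nonneg_left (hmemD (y j) (hyE j) i) (by positivity)
    · exact ⟨some i, Finset.mem_univ _, mul_lt_mul_of_pos_left (hystrict i hi) (by positivity)⟩
  have key : E = {x | (∀ i, dd i ≤ c i ⬝ᵥ x) ∧ ∀ i ∈ I, c i ⬝ᵥ x = dd i} := by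
    apply Set.Subset.antisymm
    · intro x hx; exact ⟨hmemD x hx, fun i hi => hi x hx⟩
    · rintro zz ⟨hzD, hzI⟩
      set s : Finset ι := Finset.univ.filter (fun i => i ∉ I) with hs
      obtain ⟨ε, hε0, hεle⟩ : ∃ ε : ℝ, 0 < ε ∧ ∀ i ∈ s,
          ε * (|c i ⬝ᵥ (x₀ - zz)| + 1) ≤ c i ⬝ᵥ x₀ - dd i := by
        rcases s.eq_empty_or_nonempty with h | h
        · exact ⟨1, one_pos, by simp [h]⟩
        · set f : ι → ℝ := fun i => (c i ⬝ᵥ x₀ - dd i) / (|c i ⬝ᵥ (x₀ - zz)| + 1) with hf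
          obtain ⟨i0, hi0, hmin⟩ := s.exists_min_image f h
          have hfpos : ∀ i ∈ s, 0 < f i := by
            intro i hi
            have : i ∉ I := (Finset.mem_filter.mp hi).2
            have := hx₀strict i this
            apply div_pos (by linarith) (by positivity)
          refine ⟨f i0, hfpos i0 hi0, fun i hi => ?_⟩
          have h1 : f i0 ≤ f i := hmin i hi
          have h2 : f i * (|c i ⬝ᵥ (x₀ - zz)| + 1) = c i ⬝ᵥ x₀ - dd i := by
            rw [hf]; field_simp
          calc f i0 * (|c i ⬝ᵥ (x₀ - zz)| + 1) ≤ f i * (|c i ⬝ᵥ (x₀ - zz)| + 1) :=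
                mul_le_mul_of_nonneg_right h1 (by positivity)
            _ = _ := h2
      set w : Fin n → ℝ := x₀ + ε • (x₀ - zz) with hw
      have hdotw : ∀ i, c i ⬝ᵥ w = c i ⬝ᵥ x₀ + ε * (c i ⬝ᵥ (x₀ - zz)) := by
        intro i; rw [hw, dotProduct_add, dotProduct_smul]; simp [smul_eq_mul]
      have hwD : w ∈ D := by
        rw [hD]; intro i
        rw [hdotw]
        by_cases hi : i ∈ I
        · have h1 : c i ⬝ᵥ x₀ = dd i := hx₀tight i hi
          have h2 : c i ⬝ᵥ (x₀ - zz) = 0 := by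
            rw [sub_eq_add_neg, dotProduct_add, dotProduct_neg, h1, hzI i hi]; ring
          rw [h1, h2]; simp
        · have h3 := hεle i (by simp [hs, hi])
          have h4 : ε * (c i ⬝ᵥ (x₀ - zz)) ≥ -(ε * (|c i ⬝ᵥ (x₀ - zz)| + 1)) := by
            have := neg_abs_le (c i ⬝ᵥ (x₀ - zz))
            nlinarith [hε0]
          linarith
      have hzD' : zz ∈ D := by rw [hD]; exact hzD
      have hcomb : (1/(1+ε)) • w + (1 - 1/(1+ε)) • zz = x₀ := by
        have h1e : (1:ℝ) + ε ≠ 0 := by linarith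
        rw [hw]; funext j
        simp only [Pi.add_apply, Pi.smul_apply, Pi.sub_apply, smul_eq_mul]
        field_simp
        ring
      have := hE.2.2 w hwD zz hzD' (1/(1+ε)) (by positivity)
        (by rw [div_lt_one (by linarith)]; linarith) (by rw [hcomb]; exact hx₀E)
      exact this.2
  rw [key]
  have : {x : Fin n → ℝ | (∀ i, dd i ≤ c i ⬝ᵥ x) ∧ ∀ i ∈ I, c i ⬝ᵥ x = dd i}
      = (⋂ i, {x | dd i ≤ c i ⬝ᵥ x}) ∩ ⋂ i ∈ I, {x | c i ⬝ᵥ x = dd i} := by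
    ext x; simp [Set.mem_iInter]
  rw [this]
  apply IsClosed.inter
  · exact isClosed_iInter fun i => isClosed_le continuous_const (continuous_dot' _)
  · exact isClosed_iInter fun i => isClosed_iInter fun _ =>
      isClosed_eq (continuous_dot' _) continuous_const

section HsetSec
variable {q k : ℕ} (W : Matrix (Fin k) (Fin q) ℝ) (v : Fin k → ℝ)

@[simp] lemma projq_lift1 (x : Fin q → ℝ) : projq (lift1 x) = x := by
  funext i; simp [projq, lift1]
@[simp] lemma lift1_last (x : Fin q → ℝ) : lift1 x (Fin.last q) = 1 := by simp [lift1]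
@[simp] lemma projq_lift0 (x : Fin q → ℝ) : projq (lift0 x) = x := by
  funext i; simp [projq, lift0]
@[simp] lemma lift0_last (x : Fin q → ℝ) : lift0 x (Fin.last q) = 0 := by simp [lift0]
lemma projq_smul (l : ℝ) (w : Fin (q+1) → ℝ) : projq (l • w) = l • projq w := rfl
lemma projq_add (w w' : Fin (q+1) → ℝ) : projq (w + w') = projq w + projq w' := rfl

lemma lift1_projq {w : Fin (q+1) → ℝ} (hw : w (Fin.last q) = 1) : lift1 (projq w) = w := by
  funext j
  refine Fin.lastCases ?_ ?_ j
  · simp [lift1, hw]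
  · intro i; simp [lift1, projq]

lemma lift0_projq {w : Fin (q+1) → ℝ} (hw : w (Fin.last q) = 0) : lift0 (projq w) = w := by
  funext j
  refine Fin.lastCases ?_ ?_ j
  · simp [lift0, hw]
  · intro i; simp [lift0, projq]

lemma lift1_combo {a b : ℝ} (hab : a + b = 1) (x y : Fin q → ℝ) :
    lift1 (a • x + b • y) = a • lift1 x + b • lift1 y := by
  funext j
  refine Fin.lastCases ?_ ?_ j
  · simp [lift1, hab]
  · intro i; simp [lift1]

lemma lift1_add_smul_lift0 (x d : Fin q → ℝ) (s : ℝ) :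
    lift1 (x + s • d) = lift1 x + s • lift0 d := by
  funext j
  refine Fin.lastCases ?_ ?_ j
  · simp [lift1, lift0]
  · intro i; simp [lift1, lift0]

def Hset : Set (Fin (q + 1) → ℝ) :=
  {w | 0 ≤ w (Fin.last q) ∧ ∀ i, w (Fin.last q) * v i ≤ W.mulVec (projq w) i}

lemma Hset_convex : Convex ℝ (Hset W v) := by
  rintro w1 ⟨h1, h1'⟩ w2 ⟨h2, h2'⟩ a b ha hb hab
  constructor
  · simp only [Pi.add_apply, Pi.smul_apply, smul_eq_mul]; positivity
  · intro i
    have : W.mulVec (projq (a • w1 + b • w2)) i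
        = a * W.mulVec (projq w1) i + b * W.mulVec (projq w2) i := by
      rw [projq_add, projq_smul, projq_smul, mulVec_add, mulVec_smul, mulVec_smul]
      simp [smul_eq_mul]
    rw [this]
    simp only [Pi.add_apply, Pi.smul_apply, smul_eq_mul]
    have e1 := mul_le_mul_of_nonneg_left (h1' i) ha
    have e2 := mul_le_mul_of_nonneg_left (h2' i) hb
    nlinarith

lemma Hset_cone : IsConeSet (Hset W v) := by
  refine ⟨Hset_convex W v, ?_⟩
  rintro a ⟨h1, h2⟩ l hl
  constructor
  · simp only [Pi.smul_apply, smul_eq_mul]; positivity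
  · intro i
    rw [projq_smul, mulVec_smul]
    simp only [Pi.smul_apply, smul_eq_mul]
    nlinarith [h2 i]

lemma Hset_closed : IsClosed (Hset W v) := by
  have : Hset W v = {w : Fin (q+1) → ℝ | 0 ≤ w (Fin.last q)} ∩
      ⋂ i, {w | w (Fin.last q) * v i ≤ W.mulVec (projq w) i} := by
    ext w; simp [Hset, Set.mem_iInter]
  rw [this]
  apply IsClosed.inter
  · exact isClosed_le continuous_const (continuous_apply _)
  · refine isClosed_iInter fun i => isClosed_le ?_ ?_
    · exact (continuous_apply _).mul continuous_const
    · show Continuous fun w : Fin (q+1) → ℝ => W i ⬝ᵥ projq w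
      simp only [dotProduct]
      exact continuous_finset_sum _ fun j _ => continuous_const.mul (continuous_apply _)

lemma Hset_eq_ineq : ∃ (c : Option (Fin k) → (Fin (q+1) → ℝ)) (dd : Option (Fin k) → ℝ),
    Hset W v = {w | ∀ i, dd i ≤ c i ⬝ᵥ w} := by
  refine ⟨fun o => o.elim (fun j => if j = Fin.last q then 1 else 0)
    (fun i => Fin.lastCases (-v i) (fun jj => W i jj)), fun _ => 0, ?_⟩
  have hnone : ∀ w : Fin (q+1) → ℝ,
      (fun j => if j = Fin.last q then (1:ℝ) else 0) ⬝ᵥ w = w (Fin.last q) := by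
    intro w
    simp [dotProduct, ite_mul]
  have hsome : ∀ (i : Fin k) (w : Fin (q+1) → ℝ),
      (Fin.lastCases (-v i) (fun jj => W i jj) : Fin (q+1) → ℝ) ⬝ᵥ w
        = W.mulVec (projq w) i - v i * w (Fin.last q) := by
    intro i w
    rw [dotProduct, Fin.sum_univ_castSucc]
    simp only [Fin.lastCases_castSucc, Fin.lastCases_last]
    rw [mulVec, dotProduct]
    simp only [projq]
    ring
  ext w
  constructor
  · rintro ⟨h0, hi⟩ (_|i)
    · simpa [hnone] using h0
    · simp only [Option.elim_some]
      rw [hsome]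
      have := hi i
      linarith
  · intro h
    constructor
    · have := h none; simpa [hnone] using this
    · intro i
      have := h (some i)
      simp only [Option.elim_some] at this
      rw [hsome] at this
      linarith

variable {B : Set (Fin q → ℝ)} (hBdef : B = {x | v ≤ W.mulVec x})

include hBdef in
lemma poly_convex : Convex ℝ B := by
  rw [hBdef]
  rintro x hx y hy a b ha hb hab
  intro i
  simp only [Set.mem_setOf_eq] at hx hy
  have h1 := hx i
  have h2 := hy i
  simp only [mulVec_add, mulVec_smul, Pi.add_apply, Pi.smul_apply, smul_eq_mul]
  have h3 : a * v i + b * v i = v i := by rw [← add_mul, hab, one_mul]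
  nlinarith [mul_le_mul_of_nonneg_left h1 ha, mul_le_mul_of_nonneg_left h2 hb]

include hBdef in
lemma lift1_mem_Hset {x : Fin q → ℝ} (hx : x ∈ B) : lift1 x ∈ Hset W v := by
  rw [hBdef] at hx
  refine ⟨by simp, fun i => ?_⟩
  simp only [lift1_last, one_mul, projq_lift1]
  exact hx i

include hBdef in
lemma Hset_last_one_mem {w : Fin (q+1) → ℝ} (hw : w ∈ Hset W v)
    (h1 : w (Fin.last q) = 1) : projq w ∈ B := by
  rw [hBdef]
  intro i
  have := hw.2 i
  rw [h1, one_mul] at this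
  exact this

include hBdef in
lemma coneOf_subset_Hset : coneOf (lift1 '' B) ⊆ Hset W v := by
  rintro _ ⟨l, hl, x, hx, rfl⟩
  have hsub : lift1 '' B ⊆ Hset W v := by
    rintro _ ⟨y, hy, rfl⟩; exact lift1_mem_Hset W v hBdef hy
  have := convexHull_min hsub (Hset_convex W v) hx
  exact (Hset_cone W v).2 _ this l hl

include hBdef in
lemma mem_recCone_of (d : Fin q → ℝ) (hd : ∀ i, 0 ≤ W.mulVec d i) : d ∈ recCone B := by
  intro x hx t ht
  rw [hBdef] at hx ⊢
  intro i
  rw [mulVec_add, mulVec_smul]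
  simp only [Pi.add_apply, Pi.smul_apply, smul_eq_mul]
  have := hx i
  nlinarith [hd i]

include hBdef in
lemma Phi_eq_Hset (hne : B.Nonempty) : PhiMap B = Hset W v := by
  apply Set.Subset.antisymm
  · exact closure_minimal (coneOf_subset_Hset W v hBdef) (Hset_closed W v)
  · intro w hw
    obtain ⟨h0, hineq⟩ := hw
    rcases eq_or_lt_of_le h0 with ht0 | ht0
    · obtain ⟨b₀, hb₀⟩ := hne
      set d : Fin q → ℝ := projq w with hd
      have hdrec : ∀ i, 0 ≤ W.mulVec d i := by
        intro i; have := hineq i; rw [← ht0] at this; linarith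
      have hmem : ∀ n : ℕ, w + ((n:ℝ)+1)⁻¹ • lift1 b₀ ∈ coneOf (lift1 '' B) := by
        intro n
        refine ⟨((n:ℝ)+1)⁻¹, by positivity, lift1 (b₀ + ((n:ℝ)+1) • d), ?_, ?_⟩
        · apply subset_convexHull
          refine ⟨b₀ + ((n:ℝ)+1) • d, ?_, rfl⟩
          rw [hBdef]
          intro i
          rw [mulVec_add, mulVec_smul]
          simp only [Pi.add_apply, Pi.smul_apply, smul_eq_mul]
          have h1 : v i ≤ W.mulVec b₀ i := by rw [hBdef] at hb₀; exact hb₀ i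
          nlinarith [hdrec i]
        · funext j
          refine Fin.lastCases ?_ ?_ j
          · simp [lift1, Fin.snoc_last, ← ht0]
          · intro i
            simp only [Pi.add_apply, Pi.smul_apply, lift1, Fin.snoc_castSucc, smul_eq_mul]
            have hwi : w i.castSucc = d i := rfl
            have hne : (1:ℝ) + (n:ℝ) ≠ 0 := by positivity
            rw [hwi]; field_simp; ring
      have h1 : Filter.Tendsto (fun n : ℕ => ((n:ℝ)+1)⁻¹) Filter.atTop (nhds 0) := by
        simpa [one_div] using (tendsto_one_div_add_atTop_nhds_zero_nat (𝕜 := ℝ))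
      have h2 := (h1.smul_const (lift1 b₀ : Fin (q+1) → ℝ))
      rw [zero_smul] at h2
      have h3 : Filter.Tendsto (fun n : ℕ => w + ((n:ℝ)+1)⁻¹ • lift1 b₀)
          Filter.atTop (nhds w) := by
        have := (tendsto_const_nhds (x := w) (f := Filter.atTop (α := ℕ))).add h2
        simpa using this
      exact mem_closure_of_tendsto h3 (Filter.Eventually.of_forall hmem)
    · apply subset_closure
      set t : ℝ := w (Fin.last q) with htdef
      refine ⟨t, le_of_lt ht0, lift1 (t⁻¹ • projq w), ?_, ?_⟩
      · apply subset_convexHull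
        refine ⟨t⁻¹ • projq w, ?_, rfl⟩
        rw [hBdef]
        intro i
        rw [mulVec_smul]
        simp only [Pi.smul_apply, smul_eq_mul]
        have := hineq i
        rw [inv_mul_eq_div, le_div_iff₀ ht0]
        nlinarith
      · funext j
        refine Fin.lastCases ?_ ?_ j
        · simp [lift1, Fin.snoc_last, htdef]
        · intro i
          simp only [Pi.smul_apply, lift1, Fin.snoc_castSucc, smul_eq_mul]
          rw [mul_inv_cancel_left₀ (ne_of_gt ht0)]
          rfl
end HsetSec
end Stmt7Aux


/-- If `E` is a face of `Φ(B)` with `E ⊄ 0⁺B × {0}`, then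
`F := p[E ∩ (B × {1})]` is a face of `B` and `Φ(F) = E`. -/
theorem stmt7 (q : ℕ) (B : Set (Fin q → ℝ)) (hB : IsPolyhedron B)
    (E : Set (Fin (q + 1) → ℝ)) (hE : IsFaceOf E (PhiMap B))
    (hEnot : ¬ E ⊆ lift0 '' recCone B) :
    IsFaceOf (projq '' (E ∩ lift1 '' B)) B ∧ PhiMap (projq '' (E ∩ lift1 '' B)) = E := by
  classical
  obtain ⟨k, W, v, hBdef⟩ := hB
  have hBne : B.Nonempty := by
    rcases B.eq_empty_or_nonempty with h | h
    · exfalso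
      apply hEnot
      have hPhiempty : PhiMap B = (∅ : Set (Fin (q+1) → ℝ)) := by
        rw [PhiMap, h]
        simp [coneOf]
      intro x hx
      exact absurd (hE.2.1 hx) (by rw [hPhiempty]; exact Set.notMem_empty _)
    · exact h
  have hPhi : PhiMap B = Hset W v := Phi_eq_Hset W v hBdef hBne
  have hEface : IsFaceOf E (Hset W v) := by rw [hPhi] at hE; exact hE
  have hEHset : E ⊆ Hset W v := hEface.2.1
  have hconeH : IsConeSet (Hset W v) := Hset_cone W v
  obtain ⟨c, dd, hHineq⟩ := Hset_eq_ineq W v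
  have hEclosed : IsClosed E := face_closed c dd hHineq hEface
  obtain ⟨e₀, he₀E, he₀pos⟩ : ∃ e₀ ∈ E, 0 < e₀ (Fin.last q) := by
    by_contra h
    push_neg at h
    apply hEnot
    intro w hw
    have hwH := hEHset hw
    have hlast : w (Fin.last q) = 0 := le_antisymm (h w hw) hwH.1
    have hd : projq w ∈ recCone B := by
      apply mem_recCone_of W v hBdef
      intro i
      have := hwH.2 i
      rw [hlast, zero_mul] at this
      exact this
    exact ⟨projq w, hd, lift0_projq hlast⟩
  have hFmem : ∀ x : Fin q → ℝ, x ∈ projq '' (E ∩ lift1 '' B) ↔ x ∈ B ∧ lift1 x ∈ E := by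
    intro x
    constructor
    · rintro ⟨w, ⟨hwE, y, hyB, rfl⟩, rfl⟩
      rw [projq_lift1]
      exact ⟨hyB, hwE⟩
    · rintro ⟨hxB, hxE⟩
      exact ⟨lift1 x, ⟨hxE, x, hxB, rfl⟩, projq_lift1 x⟩
  set F : Set (Fin q → ℝ) := projq '' (E ∩ lift1 '' B) with hF
  have hBconv : Convex ℝ B := poly_convex W v hBdef
  have hpos_char : ∀ e ∈ E, ∀ ht : 0 < e (Fin.last q),
      projq ((e (Fin.last q))⁻¹ • e) ∈ F ∧
        e = (e (Fin.last q)) • lift1 (projq ((e (Fin.last q))⁻¹ • e)) := by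
    intro e heE ht
    have htne : e (Fin.last q) ≠ 0 := ne_of_gt ht
    have hsc : (e (Fin.last q))⁻¹ • e ∈ E :=
      face_smul_mem hconeH hEface heE (by positivity)
    have hsclast : ((e (Fin.last q))⁻¹ • e) (Fin.last q) = 1 := by
      simp only [Pi.smul_apply, smul_eq_mul]
      exact inv_mul_cancel₀ htne
    have hlp : lift1 (projq ((e (Fin.last q))⁻¹ • e)) = (e (Fin.last q))⁻¹ • e :=
      lift1_projq hsclast
    have hxB : projq ((e (Fin.last q))⁻¹ • e) ∈ B :=
      Hset_last_one_mem W v hBdef (hEHset hsc) hsclast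
    refine ⟨(hFmem _).2 ⟨hxB, by rw [hlp]; exact hsc⟩, ?_⟩
    rw [hlp, smul_smul, mul_inv_cancel₀ htne, one_smul]
  have hlift1Phi : ∀ x ∈ B, lift1 x ∈ Hset W v := fun x hx => lift1_mem_Hset W v hBdef hx
  have hFface : IsFaceOf F B := by
    refine ⟨?_, ?_, ?_⟩
    · rintro x1 hx1 x2 hx2 a b ha hb hab
      rw [hFmem] at hx1 hx2 ⊢
      refine ⟨hBconv hx1.1 hx2.1 ha hb hab, ?_⟩
      rw [lift1_combo hab]
      exact hEface.1 hx1.2 hx2.2 ha hb hab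
    · intro x hx; exact ((hFmem x).1 hx).1
    · intro y hy z hz l hl0 hl1 hcomb
      rw [hFmem] at hcomb
      have h1 : lift1 (l • y + (1-l) • z) ∈ E := hcomb.2
      rw [lift1_combo (by ring)] at h1
      have := hEface.2.2 _ (hlift1Phi y hy) _ (hlift1Phi z hz) l hl0 hl1 h1
      exact ⟨(hFmem y).2 ⟨hy, this.1⟩, (hFmem z).2 ⟨hz, this.2⟩⟩
  refine ⟨hFface, ?_⟩
  apply Set.Subset.antisymm
  · apply closure_minimal ?_ hEclosed
    rintro _ ⟨l, hl, x, hx, rfl⟩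
    have hsub : lift1 '' F ⊆ E := by
      rintro _ ⟨y, hy, rfl⟩
      exact ((hFmem y).1 hy).2
    have hxE : x ∈ E := convexHull_min hsub hEface.1 hx
    exact face_smul_mem hconeH hEface hxE hl
  · intro e heE
    have heH : e ∈ Hset W v := hEHset heE
    rcases eq_or_lt_of_le heH.1 with ht0 | ht0
    · set d : Fin q → ℝ := projq e with hdd
      obtain ⟨hx₀F, -⟩ := hpos_char e₀ he₀E he₀pos
      set x₀ := projq ((e₀ (Fin.last q))⁻¹ • e₀) with hx₀
      have hx₀E : lift1 x₀ ∈ E := ((hFmem x₀).1 hx₀F).2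
      have hlift0d : lift0 d = e := lift0_projq ht0.symm
      have hFn : ∀ n : ℕ, x₀ + ((n:ℝ)+1) • d ∈ F := by
        intro n
        have hEmem : lift1 (x₀ + ((n:ℝ)+1) • d) ∈ E := by
          rw [lift1_add_smul_lift0, hlift0d]
          exact face_add_mem hconeH hEface hx₀E
            (face_smul_mem hconeH hEface heE (by positivity))
        have hBmem : x₀ + ((n:ℝ)+1) • d ∈ B := by
          have := Hset_last_one_mem W v hBdef (hEHset hEmem) (by simp)
          rwa [projq_lift1] at this
        exact (hFmem _).2 ⟨hBmem, hEmem⟩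
      have hmem : ∀ n : ℕ, e + ((n:ℝ)+1)⁻¹ • lift1 x₀ ∈ coneOf (lift1 '' F) := by
        intro n
        refine ⟨((n:ℝ)+1)⁻¹, by positivity, lift1 (x₀ + ((n:ℝ)+1) • d), ?_, ?_⟩
        · exact subset_convexHull ℝ _ ⟨_, hFn n, rfl⟩
        · funext j
          refine Fin.lastCases ?_ ?_ j
          · simp [lift1, Fin.snoc_last, ← ht0]
          · intro i
            simp only [Pi.add_apply, Pi.smul_apply, lift1, Fin.snoc_castSucc, smul_eq_mul]
            have hwi : e i.castSucc = d i := rfl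
            have hne2 : (1:ℝ) + (n:ℝ) ≠ 0 := by positivity
            rw [hwi]; field_simp; ring
      have h1 : Filter.Tendsto (fun n : ℕ => ((n:ℝ)+1)⁻¹) Filter.atTop (nhds 0) := by
        simpa [one_div] using (tendsto_one_div_add_atTop_nhds_zero_nat (𝕜 := ℝ))
      have h2 := h1.smul_const (lift1 x₀ : Fin (q+1) → ℝ)
      rw [zero_smul] at h2
      have h3 : Filter.Tendsto (fun n : ℕ => e + ((n:ℝ)+1)⁻¹ • lift1 x₀)
          Filter.atTop (nhds e) := by
        have := (tendsto_const_nhds (x := e) (f := Filter.atTop (α := ℕ))).add h2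
        simpa using this
      exact mem_closure_of_tendsto h3 (Filter.Eventually.of_forall hmem)
    · obtain ⟨hxF, hdecomp⟩ := hpos_char e heE ht0
      apply subset_closure
      exact ⟨e (Fin.last q), le_of_lt ht0, lift1 (projq ((e (Fin.last q))⁻¹ • e)),
        subset_convexHull ℝ _ ⟨_, hxF, rfl⟩, hdecomp⟩
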